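/- arXiv:1410.6867 — 5 statements merged into one kernel-verified Lean document; each statement's English description precedes it below -/
import Mathlib

section
/- (n-Amalgamation lemma) Let G be a finite abelian group and p a prime dividing |G|. Write the p-Sylow subgroup of G as C_{p^{a_1}} ⊕ ⋯ ⊕ C_{p^{a_k}} with a_1 ≥ a_2 ≥ ⋯ ≥ a_k ≥ 1 (setting a_j = 0 for j > k), and suppose a_n > a_{n+1} for some positive integer n. Let l be a positive integer divisible by p^{a_{n+1}+1}. If S is a dense zero-sum free sequence over G, then S contains at most η(C_p^n) − 1 elements of order l. -/
/-- The cross number `k(S)` of a sequence (finite multiset) `S` over an additive group: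
the sum, with multiplicity, of the reciprocals of the orders of its elements. -/
noncomputable def crossNum {G : Type*} [AddCommGroup G] (S : Multiset G) : ℝ :=
  (S.map fun g => ((addOrderOf g : ℝ))⁻¹).sum

/-- `S` is zero-sum free: no nonempty sub-multiset of `S` has sum `0`. -/
def IsZeroSumFree {G : Type*} [AddCommGroup G] (S : Multiset G) : Prop :=
  ∀ T : Multiset G, T ≤ S → T ≠ 0 → T.sum ≠ 0

/-- The little cross number `k(G)`: the maximal cross number of a zero-sum free
sequence over `G`. -/
noncomputable def littleK (G : Type*) [AddCommGroup G] : ℝ :=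
  sSup {x : ℝ | ∃ S : Multiset G, IsZeroSumFree S ∧ crossNum S = x}

/-- A zero-sum free sequence `S` over `G` is dense if it has maximal cross number and,
among zero-sum free sequences of maximal cross number, minimal length. -/
def IsDense {G : Type*} [AddCommGroup G] (S : Multiset G) : Prop :=
  IsZeroSumFree S ∧ crossNum S = littleK G ∧
    Multiset.card S =
      sInf {c : ℕ | ∃ T : Multiset G,
        IsZeroSumFree T ∧ crossNum T = littleK G ∧ Multiset.card T = c}

/-- The invariant `η(G)`: the smallest `l` such that every sequence over `G` of length
at least `l` has a nonempty zero-sum subsequence of length at most `exp(G)`. -/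
noncomputable def etaInv (G : Type*) [AddCommGroup G] : ℕ :=
  sInf {l : ℕ | ∀ S : Multiset G, l ≤ Multiset.card S →
    ∃ T : Multiset G, T ≤ S ∧ T ≠ 0 ∧ Multiset.card T ≤ AddMonoid.exponent G ∧ T.sum = 0}

/-! ### Auxiliary lemmas -/

/-- Pull back a sub-multiset along `map`. -/
lemma aux_exists_preimage_of_le_map {α β : Type*} [DecidableEq α] {f : α → β} :
    ∀ (T : Multiset β) (s : Multiset α), T ≤ s.map f → ∃ s', s' ≤ s ∧ s'.map f = T := by
  intro T
  induction T using Multiset.induction_on with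
  | empty => exact fun s _ => ⟨0, Multiset.zero_le _, rfl⟩
  | cons b T ih =>
    intro s h
    have hb : b ∈ s.map f := Multiset.mem_of_le h (Multiset.mem_cons_self _ _)
    obtain ⟨x, hx, rfl⟩ := Multiset.mem_map.mp hb
    have hs : s.map f = f x ::ₘ (s.erase x).map f := by
      conv_lhs => rw [← Multiset.cons_erase hx, Multiset.map_cons]
    rw [hs] at h
    obtain ⟨s', hs', rfl⟩ := ih (s.erase x) ((Multiset.cons_le_cons_iff _).mp h)
    refine ⟨x ::ₘ s', ?_, by rw [Multiset.map_cons]⟩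
    calc x ::ₘ s' ≤ x ::ₘ s.erase x := Multiset.cons_le_cons _ hs'
    _ = s := Multiset.cons_erase hx

/-- Decompose a sub-multiset of a sum. -/
lemma aux_le_add_decomp {α : Type*} [DecidableEq α] (T A B : Multiset α) (h : T ≤ A + B) :
    ∃ u v, u ≤ A ∧ v ≤ B ∧ T = u + v := by
  refine ⟨T ∩ A, T - A, Multiset.inter_le_right, ?_, ?_⟩
  · rw [Multiset.le_iff_count] at h ⊢
    intro x
    have := h x
    simp only [Multiset.count_sub, Multiset.count_add] at *
    omega
  · ext x
    simp only [Multiset.count_add, Multiset.count_inter, Multiset.count_sub]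
    omega

lemma aux_sum_map_nsmul {G : Type*} [AddCommGroup G] (s : Multiset G) (v : ℕ) :
    (s.map fun x => v • x).sum = v • s.sum := by
  induction s using Multiset.induction_on with
  | empty => simp
  | cons a s ih => simp [ih, smul_add]

lemma IsZeroSumFree.card_lt {G : Type*} [AddCommGroup G] [Finite G] {S : Multiset G}
    (hS : IsZeroSumFree S) : Multiset.card S < Nat.card G := by
  classical
  haveI := Fintype.ofFinite G
  by_contra hc
  push_neg at hc
  set L := S.toList with hLdef
  have hLS : (L : Multiset G) = S := S.coe_toList
  have hlen : Nat.card G ≤ L.length := by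
    rwa [← hLS, Multiset.coe_card] at hc
  have key : ∀ i j : Fin (L.length + 1), (i : ℕ) < (j : ℕ) →
      (L.take i).sum = (L.take j).sum → False := by
    intro i j hij hsum
    have hjL : (j : ℕ) ≤ L.length := by omega
    set l₀ : List G := (L.drop i).take ((j : ℕ) - i) with hl₀
    set M : Multiset G := (l₀ : Multiset G) with hM
    have htake : L.take j = L.take i ++ l₀ := by
      rw [hl₀, ← List.take_add]
      congr 1
      omega
    have hsum0 : M.sum = 0 := by
      have h1 : (L.take (j : ℕ)).sum = (L.take (i : ℕ)).sum + l₀.sum := by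
        rw [htake, List.sum_append]
      have h2 : M.sum = l₀.sum := Multiset.sum_coe _
      rw [h2]
      have h3 : (L.take (i : ℕ)).sum + l₀.sum = (L.take (i : ℕ)).sum + 0 := by
        rw [add_zero, ← h1, hsum]
      exact add_left_cancel h3
    have hMne : M ≠ 0 := by
      rw [hM, Ne, Multiset.coe_eq_zero, ← List.length_eq_zero_iff, hl₀,
        List.length_take, List.length_drop]
      omega
    have hMS : M ≤ S := by
      rw [hM, ← hLS, Multiset.coe_le]
      refine List.Sublist.subperm ?_
      have hinfix : l₀ <:+: L := by
        refine ⟨L.take i, (L.drop i).drop ((j : ℕ) - i), ?_⟩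
        rw [List.append_assoc, List.take_append_drop, List.take_append_drop]
      exact hinfix.sublist
    exact hS M hMS hMne hsum0
  have hcard : Fintype.card G < Fintype.card (Fin (L.length + 1)) := by
    rw [Fintype.card_fin, ← Nat.card_eq_fintype_card]
    omega
  obtain ⟨i, j, hij, hfij⟩ := Fintype.exists_ne_map_eq_of_card_lt
    (fun i : Fin (L.length + 1) => (L.take i).sum) hcard
  rcases lt_or_gt_of_ne (fun h : (i : ℕ) = (j : ℕ) => hij (Fin.ext h)) with h | h
  · exact key i j h hfij
  · exact key j i h hfij.symm

lemma aux_crossNum_le_card {G : Type*} [AddCommGroup G] (S : Multiset G) :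
    crossNum S ≤ Multiset.card S := by
  unfold crossNum
  calc (S.map fun g => ((addOrderOf g : ℝ))⁻¹).sum
      ≤ Multiset.card (S.map fun g => ((addOrderOf g : ℝ))⁻¹) • (1 : ℝ) := by
        refine Multiset.sum_le_card_nsmul _ _ ?_
        intro x hx
        obtain ⟨g, _, rfl⟩ := Multiset.mem_map.mp hx
        rcases Nat.eq_zero_or_pos (addOrderOf g) with h | h
        · simp [h]
        · have h1 : (1 : ℝ) ≤ (addOrderOf g : ℝ) := by exact_mod_cast h
          calc ((addOrderOf g : ℝ))⁻¹ ≤ 1⁻¹ := by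
                apply inv_anti₀ one_pos h1
          _ = 1 := inv_one
    _ = Multiset.card S := by simp

lemma aux_crossNum_bddAbove (G : Type*) [AddCommGroup G] [Finite G] :
    BddAbove {x : ℝ | ∃ S : Multiset G, IsZeroSumFree S ∧ crossNum S = x} := by
  refine ⟨Nat.card G, ?_⟩
  rintro x ⟨S, hS, rfl⟩
  calc crossNum S ≤ Multiset.card S := aux_crossNum_le_card S
  _ ≤ (Nat.card G : ℝ) := by exact_mod_cast hS.card_lt.le

lemma aux_crossNum_add {G : Type*} [AddCommGroup G] (A B : Multiset G) :
    crossNum (A + B) = crossNum A + crossNum B := by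
  simp [crossNum]

lemma aux_crossNum_singleton {G : Type*} [AddCommGroup G] (g : G) :
    crossNum {g} = ((addOrderOf g : ℝ))⁻¹ := by
  simp [crossNum]

lemma aux_etaInv_spec (α : Type*) [AddCommGroup α] [Finite α] (S : Multiset α)
    (h : etaInv α ≤ Multiset.card S) :
    ∃ T, T ≤ S ∧ T ≠ 0 ∧ Multiset.card T ≤ AddMonoid.exponent α ∧ T.sum = 0 := by
  classical
  haveI := Fintype.ofFinite α
  set E := AddMonoid.exponent α with hE
  have hE0 : 0 < E := Nat.pos_of_ne_zero AddMonoid.exponent_ne_zero_of_finite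
  have hmem : (Fintype.card α * E + 1) ∈ {l : ℕ | ∀ S : Multiset α, l ≤ Multiset.card S →
      ∃ T : Multiset α, T ≤ S ∧ T ≠ 0 ∧ Multiset.card T ≤ AddMonoid.exponent α ∧ T.sum = 0} := by
    intro U hU
    have hcount : ∃ g, E < U.count g := by
      by_contra hno
      push_neg at hno
      have h1 : Multiset.card U = ∑ x ∈ U.toFinset, U.count x :=
        (Multiset.toFinset_sum_count_eq U).symm
      have h2 : ∑ x ∈ U.toFinset, U.count x ≤ U.toFinset.card * E := by
        calc ∑ x ∈ U.toFinset, U.count x ≤ U.toFinset.card • E :=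
              Finset.sum_le_card_nsmul _ _ _ fun x _ => hno x
        _ = U.toFinset.card * E := by rw [smul_eq_mul]
      have h3 : U.toFinset.card ≤ Fintype.card α := U.toFinset.card_le_univ
      have h4 : U.toFinset.card * E ≤ Fintype.card α * E := Nat.mul_le_mul_right E h3
      omega
    obtain ⟨g, hg⟩ := hcount
    have hord : addOrderOf g ≤ E := Nat.le_of_dvd hE0 (AddMonoid.addOrder_dvd_exponent g)
    have hordpos : 0 < addOrderOf g := addOrderOf_pos g
    refine ⟨Multiset.replicate (addOrderOf g) g, ?_, ?_, ?_, ?_⟩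
    · exact Multiset.le_count_iff_replicate_le.mp (by omega)
    · intro h0
      have := congrArg Multiset.card h0
      rw [Multiset.card_replicate, Multiset.card_zero] at this
      omega
    · simpa [← hE] using hord
    · rw [Multiset.sum_replicate]
      exact addOrderOf_nsmul_eq_zero g
  exact Nat.sInf_mem (Set.nonempty_of_mem hmem) S h

lemma aux_pow_pred_mul (p m : ℕ) (hm : 1 ≤ m) : p * p ^ (m - 1) = p ^ m := by
  rw [← pow_succ']; congr 1; omega

lemma aux_zsmul_tors (p : ℕ) (hp : p.Prime) (m : ℕ) (hm : 1 ≤ m) :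
    (zmultiplesHom (ZMod (p ^ m)) ((p ^ (m - 1) : ℕ) : ZMod (p ^ m))) (p : ℤ) = 0 := by
  show (p : ℤ) • ((p ^ (m - 1) : ℕ) : ZMod (p ^ m)) = 0
  have h : (p : ℤ) • ((p ^ (m - 1) : ℕ) : ZMod (p ^ m))
      = ((p * p ^ (m - 1) : ℕ) : ZMod (p ^ m)) := by
    rw [natCast_zsmul, nsmul_eq_mul]; push_cast; ring
  rw [h, aux_pow_pred_mul p m hm, ZMod.natCast_self]

/-- The homomorphism `ZMod p →+ ZMod (p ^ m)` sending `1` to `p ^ (m - 1)`. -/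
noncomputable def auxLiftHom (p : ℕ) (hp : p.Prime) (m : ℕ) (hm : 1 ≤ m) :
    ZMod p →+ ZMod (p ^ m) :=
  ZMod.lift p ⟨zmultiplesHom _ ((p ^ (m - 1) : ℕ) : ZMod (p ^ m)), aux_zsmul_tors p hp m hm⟩

lemma auxLiftHom_natCast (p : ℕ) (hp : p.Prime) (m : ℕ) (hm : 1 ≤ m) (c : ℕ) :
    auxLiftHom p hp m hm (c : ZMod p) = ((c * p ^ (m - 1) : ℕ) : ZMod (p ^ m)) := by
  have h1 : ((c : ℤ) : ZMod p) = (c : ZMod p) := by push_cast; ring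
  rw [← h1, auxLiftHom, ZMod.lift_coe]
  show (c : ℤ) • ((p ^ (m - 1) : ℕ) : ZMod (p ^ m)) = _
  rw [natCast_zsmul, nsmul_eq_mul]
  push_cast
  ring

lemma auxLiftHom_surj_tors (p : ℕ) (hp : p.Prime) (m : ℕ) (hm : 1 ≤ m) (x : ZMod (p ^ m))
    (hx : p • x = 0) : ∃ u : ZMod p, auxLiftHom p hp m hm u = x := by
  haveI : NeZero (p ^ m) := ⟨pow_ne_zero m hp.ne_zero⟩
  have hval : ((x.val : ℕ) : ZMod (p ^ m)) = x := ZMod.natCast_rightInverse x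
  have hdvd : p ^ m ∣ p * x.val := by
    rw [← ZMod.natCast_eq_zero_iff]
    push_cast
    rw [hval, ← nsmul_eq_mul]
    exact hx
  have hdvd2 : p ^ (m - 1) ∣ x.val := by
    have h1 : p * p ^ (m - 1) ∣ p * x.val := by rwa [aux_pow_pred_mul p m hm]
    exact (mul_dvd_mul_iff_left (hp.ne_zero : (p : ℕ) ≠ 0)).mp h1
  obtain ⟨c, hc⟩ := hdvd2
  exact ⟨(c : ZMod p), by rw [auxLiftHom_natCast, mul_comm c, ← hc, hval]⟩

/-- (n-Amalgamation lemma) Let `p` be a prime dividing `|G|`, and write the `p`-Sylow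
subgroup of `G` as `C_{p^{a_1}} ⊕ ⋯ ⊕ C_{p^{a_k}}` with `a_1 ≥ ⋯ ≥ a_k ≥ 1` (and
`a_j = 0` for `j > k`), i.e. `G ≅ (⨁_{j=1}^k C_{p^{a_j}}) ⊕ G'` with `p ∤ |G'|`.
Suppose `a_n > a_{n+1}` and `p^{a_{n+1}+1} ∣ l`. Then a dense zero-sum free sequence
`S` over `G` contains at most `η(C_p^n) - 1` elements of order `l`. -/
theorem n_amalgamation_lemma
    (G : Type*) [AddCommGroup G] [Finite G] (p : ℕ) (hp : p.Prime)
    (hpG : p ∣ Nat.card G)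
    (k : ℕ) (a : ℕ → ℕ)
    (hanti : ∀ i j : ℕ, 1 ≤ i → i ≤ j → a j ≤ a i)
    (hpos : ∀ j : ℕ, 1 ≤ j → j ≤ k → 1 ≤ a j)
    (hzero : ∀ j : ℕ, k < j → a j = 0)
    (G' : Type*) [AddCommGroup G'] [Finite G'] (hG' : ¬ p ∣ Nat.card G')
    (e : G ≃+ (∀ j : Fin k, ZMod (p ^ a (j.1 + 1))) × G')
    (n : ℕ) (hn : 0 < n) (hgap : a (n + 1) < a n)
    (l : ℕ) (hl : 0 < l) (hldvd : p ^ (a (n + 1) + 1) ∣ l)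
    (S : Multiset G) (hS : IsDense S) :
    Multiset.card (S.filter fun g => addOrderOf g = l) ≤ etaInv (Fin n → ZMod p) - 1 := by
  classical
  haveI : NeZero p := ⟨hp.ne_zero⟩
  by_contra hcon
  push_neg at hcon
  set F := S.filter (fun g => addOrderOf g = l) with hFdef
  have hFS : F ≤ S := Multiset.filter_le _ S
  have hη : etaInv (Fin n → ZMod p) ≤ Multiset.card F := by omega
  -- basic numerology
  have hnk : n ≤ k := by
    by_contra hcontra
    push_neg at hcontra
    have := hzero n (by omega)
    omega
  have hpl : p ∣ l := dvd_trans (dvd_pow_self p (Nat.succ_ne_zero _)) hldvd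
  set v := l / p with hvdef
  have hlv : l = p * v := (Nat.mul_div_cancel' hpl).symm
  have hv0 : 0 < v := by
    rcases Nat.eq_zero_or_pos v with h | h
    · rw [h, mul_zero] at hlv; omega
    · exact h
  have hpow_v : p ^ a (n + 1) ∣ v := by
    have h1 : p * p ^ a (n + 1) ∣ p * v := by
      rw [← hlv, ← pow_succ']
      exact hldvd
    exact (mul_dvd_mul_iff_left (hp.ne_zero : (p : ℕ) ≠ 0)).mp h1
  have ha1 : ∀ j : Fin k, j.1 < n → 1 ≤ a (j.1 + 1) := by
    intro j hj
    have h1 := hanti (j.1 + 1) n (by omega) (by omega)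
    omega
  -- component projections
  let π : ∀ j : Fin k, G →+ ZMod (p ^ a (j.1 + 1)) := fun j =>
    (Pi.evalAddMonoidHom _ j).comp ((AddMonoidHom.fst _ _).comp e.toAddMonoidHom)
  let π' : G →+ G' := (AddMonoidHom.snd _ _).comp e.toAddMonoidHom
  -- vanishing of high components
  have key1 : ∀ j : Fin k, ¬ j.1 < n → ∀ x : ZMod (p ^ a (j.1 + 1)), v • x = 0 := by
    intro j hj x
    haveI : NeZero (p ^ a (j.1 + 1)) := ⟨pow_ne_zero _ hp.ne_zero⟩
    have hMdvd : p ^ a (j.1 + 1) ∣ v :=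
      dvd_trans (pow_dvd_pow p (hanti (n + 1) (j.1 + 1) (by omega) (by omega))) hpow_v
    rw [nsmul_eq_mul]
    have h0 : ((v : ℕ) : ZMod (p ^ a (j.1 + 1))) = 0 :=
      (ZMod.natCast_eq_zero_iff _ _).mpr hMdvd
    rw [h0, zero_mul]
  have key2 : ∀ g : G, l • g = 0 → v • π' g = 0 := by
    intro g hlg
    have h1 : l • π' g = 0 := by rw [← map_nsmul, hlg, map_zero]
    have hd1 : addOrderOf (π' g) ∣ l := addOrderOf_dvd_iff_nsmul_eq_zero.mpr h1
    have hd2 : addOrderOf (π' g) ∣ Nat.card G' := addOrderOf_dvd_natCard _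
    have hcop : Nat.Coprime (addOrderOf (π' g)) p := by
      rcases (Nat.coprime_or_dvd_of_prime hp (addOrderOf (π' g))) with h | h
      · exact h.symm
      · exact absurd (dvd_trans h hd2) hG'
    have hdv : addOrderOf (π' g) ∣ v := by
      refine hcop.dvd_of_dvd_mul_right ?_
      rw [hlv, mul_comm] at hd1
      exact hd1
    exact addOrderOf_dvd_iff_nsmul_eq_zero.mp hdv
  -- the embedding ι : (ZMod p)^n →+ G hitting all v • g for g of order l
  have hι : ∃ ι : (Fin n → ZMod p) →+ G,
      ∀ g : G, addOrderOf g = l → ∃ u, ι u = v • g := by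
    refine ⟨AddMonoidHom.mk' (fun u => e.symm
      ((fun j => if hj : j.1 < n then auxLiftHom p hp (a (j.1 + 1)) (ha1 j hj) (u ⟨j.1, hj⟩)
        else 0), 0)) ?_, ?_⟩
    · intro u w
      rw [← map_add]
      refine congrArg e.symm (Prod.ext ?_ ?_)
      · funext j
        by_cases hj : j.1 < n
        · simp [hj]
        · simp [hj]
      · show (0 : G') = 0 + 0
        rw [add_zero]
    · intro g hg
      have hlg : l • g = 0 := by rw [← hg]; exact addOrderOf_nsmul_eq_zero g
      have hpvg : ∀ j : Fin k, p • (π j (v • g)) = 0 := by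
        intro j
        rw [← map_nsmul, smul_smul, ← hlv, hlg, map_zero]
      choose c hc using fun (j : Fin k) (hj : j.1 < n) =>
        auxLiftHom_surj_tors p hp (a (j.1 + 1)) (ha1 j hj) (π j (v • g)) (hpvg j)
      refine ⟨fun i => c ⟨i.1, lt_of_lt_of_le i.2 hnk⟩ i.2, ?_⟩
      show e.symm _ = v • g
      rw [← AddEquiv.symm_apply_apply e (v • g)]
      congr 1
      refine Prod.ext ?_ ?_
      · funext j
        by_cases hj : j.1 < n
        · simp only [hj, dif_pos]
          exact hc j hj
        · simp only [hj, dif_neg, not_false_iff]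
          have h2 : (e (v • g)).1 j = π j (v • g) := rfl
          have h3 : π j (v • g) = v • π j g := map_nsmul _ _ _
          rw [h2, h3, key1 j hj]
      · show (0 : G') = (e (v • g)).2
        have h2 : (e (v • g)).2 = π' (v • g) := rfl
        have h3 : π' (v • g) = v • π' g := map_nsmul _ _ _
        rw [h2, h3, key2 g hlg]
  obtain ⟨ι, hrep⟩ := hι
  -- choice function
  set φ : G → (Fin n → ZMod p) := fun g =>
    if hgl : addOrderOf g = l then Classical.choose (hrep g hgl) else 0 with hφdef
  have hφ : ∀ g : G, addOrderOf g = l → ι (φ g) = v • g := by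
    intro g hgl
    rw [hφdef]
    simp only [dif_pos hgl]
    exact Classical.choose_spec (hrep g hgl)
  -- apply the η-property
  have hcardmap : etaInv (Fin n → ZMod p) ≤ Multiset.card (F.map φ) := by
    rwa [Multiset.card_map]
  obtain ⟨T, hTle, hTne, hTcard, hTsum⟩ := aux_etaInv_spec _ (F.map φ) hcardmap
  obtain ⟨F₁, hF₁F, hF₁map⟩ := aux_exists_preimage_of_le_map T F hTle
  set m := Multiset.card F₁ with hmdef
  have hmT : Multiset.card T = m := by rw [← hF₁map, Multiset.card_map]
  have hF₁ne : F₁ ≠ 0 := by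
    rintro rfl
    rw [Multiset.map_zero] at hF₁map
    exact hTne hF₁map.symm
  have hordF₁ : ∀ g ∈ F₁, addOrderOf g = l := by
    intro g hg
    have := Multiset.mem_of_le hF₁F hg
    rw [hFdef, Multiset.mem_filter] at this
    exact this.2
  -- m ≤ p
  have hexp : AddMonoid.exponent (Fin n → ZMod p) ≤ p := by
    have hdvd : AddMonoid.exponent (Fin n → ZMod p) ∣ p := by
      rw [AddMonoid.exponent_dvd_iff_forall_nsmul_eq_zero]
      intro f
      funext i
      show p • f i = 0
      rw [nsmul_eq_mul, ZMod.natCast_self, zero_mul]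
    exact Nat.le_of_dvd hp.pos hdvd
  have hmp : m ≤ p := by
    rw [← hmT]
    exact hTcard.trans hexp
  -- the sum of F₁ is annihilated by v
  have hsumv : v • F₁.sum = 0 := by
    have h0 : ι T.sum = 0 := by rw [hTsum, map_zero]
    rw [← hF₁map, map_multiset_sum, Multiset.map_map] at h0
    have hcongr : F₁.map (ι ∘ φ) = F₁.map (fun g => v • g) :=
      Multiset.map_congr rfl (fun g hg => hφ g (hordF₁ g hg))
    rw [hcongr, aux_sum_map_nsmul] at h0
    exact h0
  set g₀ := F₁.sum with hg₀def
  have hg₀ne : g₀ ≠ 0 := hS.1 F₁ (le_trans hF₁F hFS) hF₁ne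
  set d := addOrderOf g₀ with hddef
  have hdv : d ∣ v := addOrderOf_dvd_iff_nsmul_eq_zero.mpr hsumv
  have hd0 : 0 < d := addOrderOf_pos g₀
  have hm1 : 1 ≤ m := by
    have := Multiset.card_pos.mpr hF₁ne
    omega
  have hm2 : 2 ≤ m := by
    by_contra hm2'
    have hcard1 : Multiset.card F₁ = 1 := by omega
    obtain ⟨g, hg⟩ := Multiset.card_eq_one.mp hcard1
    have hgsum : g₀ = g := by rw [hg₀def, hg, Multiset.sum_singleton]
    have hordg : addOrderOf g = l := hordF₁ g (by rw [hg]; exact Multiset.mem_singleton_self g)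
    have hld : l ∣ v := by
      rw [← hordg, ← hgsum, ← hddef]
      exact hdv
    have hvl : v < l := by
      rw [hvdef]
      exact Nat.div_lt_self hl hp.one_lt
    have := Nat.le_of_dvd hv0 hld
    omega
  -- the modified sequence
  set S' := (S - F₁) + {g₀} with hS'def
  have hF₁S : F₁ ≤ S := le_trans hF₁F hFS
  have hSsplit : S = (S - F₁) + F₁ := (tsub_add_cancel_of_le hF₁S).symm
  have hS'zsf : IsZeroSumFree S' := by
    intro T' hT' hT'ne hT'sum
    obtain ⟨u, w, hu, hw, rfl⟩ := aux_le_add_decomp T' _ _ hT'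
    have huS : u ≤ S := le_trans hu (tsub_le_self)
    rcases Multiset.le_singleton.mp hw with rfl | rfl
    · rw [add_zero] at hT'ne hT'sum
      exact hS.1 u huS hT'ne hT'sum
    · have hsum2 : (u + F₁).sum = 0 := by
        rw [Multiset.sum_add] at hT'sum ⊢
        rw [Multiset.sum_singleton] at hT'sum
        rw [← hg₀def, hT'sum]
      refine hS.1 (u + F₁) ?_ ?_ hsum2
      · conv_rhs => rw [hSsplit]
        exact add_le_add_left hu _
      · intro h0
        have h1 := congrArg Multiset.card h0
        rw [Multiset.card_add] at h1
        simp only [Multiset.card_zero] at h1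
        have h2 := Multiset.card_pos.mpr hF₁ne
        omega
  -- cross numbers
  have hcrF₁ : crossNum F₁ = (m : ℝ) * ((l : ℝ))⁻¹ := by
    unfold crossNum
    rw [Multiset.map_congr rfl (fun g hg => by rw [hordF₁ g hg] :
      ∀ g ∈ F₁, ((addOrderOf g : ℝ))⁻¹ = ((l : ℝ))⁻¹)]
    rw [Multiset.map_const', Multiset.sum_replicate, ← hmdef, nsmul_eq_mul]
  have hcs : crossNum S = crossNum (S - F₁) + (m : ℝ) * ((l : ℝ))⁻¹ := by
    conv_lhs => rw [hSsplit]
    rw [aux_crossNum_add, hcrF₁]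
  have hcs' : crossNum S' = crossNum (S - F₁) + ((d : ℝ))⁻¹ := by
    rw [hS'def, aux_crossNum_add, aux_crossNum_singleton, hddef]
  -- the inequality m / l ≤ 1 / d
  have hmdl : m * d ≤ l := by
    calc m * d ≤ p * v := Nat.mul_le_mul hmp (Nat.le_of_dvd hv0 hdv)
    _ = l := hlv.symm
  have hle1 : (m : ℝ) * ((l : ℝ))⁻¹ ≤ ((d : ℝ))⁻¹ := by
    have hlpos : (0 : ℝ) < l := by exact_mod_cast hl
    have hdpos : (0 : ℝ) < d := by exact_mod_cast hd0
    rw [inv_eq_one_div, inv_eq_one_div, mul_one_div, div_le_div_iff₀ hlpos hdpos]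
    have : (m : ℝ) * d ≤ l := by exact_mod_cast hmdl
    linarith
  -- contradiction with density
  have hup : crossNum S' ≤ littleK G := le_csSup (aux_crossNum_bddAbove G) ⟨S', hS'zsf, rfl⟩
  have hdown : littleK G ≤ crossNum S' := by
    rw [← hS.2.1, hcs, hcs']
    linarith
  have heq : crossNum S' = littleK G := le_antisymm hup hdown
  have hcardle : Multiset.card S ≤ Multiset.card S' := by
    rw [hS.2.2]
    exact Nat.sInf_le ⟨S', hS'zsf, heq, rfl⟩
  have hcardS' : Multiset.card S' = Multiset.card S - m + 1 := by
    rw [hS'def, Multiset.card_add, Multiset.card_sub hF₁S, Multiset.card_singleton, hmdef]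
  have hmS : m ≤ Multiset.card S := by
    rw [hmdef]
    exact Multiset.card_le_card hF₁S
  omega
end

section
/- Let p be a prime, n a positive integer, and t_1, …, t_n ∈ ℚ. Define s_1, …, s_n by s_1 = t_1 and s_i = {s_{i−1}} + t_i for i ≥ 2, where {x} = x − ⌊x⌋ denotes the fractional part. Suppose b is a positive integer with b·s_i ∈ ℤ and b·t_i ∈ ℤ for all i. Then Σ_{i=1}^n ⌊s_i⌋/p^i ≥ Σ_{i=1}^n t_i/p^i + (1/p)(1/b − 1), with equality if and only if s_i + 1/b ∈ ℤ for all i ∈ [1, n]. -/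
/-- Let `p` be a prime, `n ≥ 1`, and `t_1, …, t_n ∈ ℚ`. Define `s_1 = t_1` and
`s_i = {s_{i-1}} + t_i` for `2 ≤ i ≤ n`, where `{x}` is the fractional part. If `b` is
a positive integer with `b·s_i ∈ ℤ` and `b·t_i ∈ ℤ` for all `i ∈ [1, n]`, then
`∑_{i=1}^n ⌊s_i⌋/p^i ≥ ∑_{i=1}^n t_i/p^i + (1/p)(1/b - 1)`, with equality if and only
if `s_i + 1/b ∈ ℤ` for all `i ∈ [1, n]`. -/
theorem floor_sum_lemma_one
    (p : ℕ) (hp : p.Prime) (n : ℕ) (hn : 0 < n) (t s : ℕ → ℚ)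
    (hs1 : s 1 = t 1)
    (hrec : ∀ i : ℕ, 2 ≤ i → i ≤ n → s i = Int.fract (s (i - 1)) + t i)
    (b : ℕ) (hb : 0 < b)
    (hsb : ∀ i : ℕ, 1 ≤ i → i ≤ n → ∃ z : ℤ, (b : ℚ) * s i = z)
    (htb : ∀ i : ℕ, 1 ≤ i → i ≤ n → ∃ z : ℤ, (b : ℚ) * t i = z) :
    (∑ i ∈ Finset.Icc 1 n, (⌊s i⌋ : ℚ) / (p : ℚ) ^ i)
        ≥ (∑ i ∈ Finset.Icc 1 n, t i / (p : ℚ) ^ i) + (1 / p) * (1 / b - 1)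
      ∧ ((∑ i ∈ Finset.Icc 1 n, (⌊s i⌋ : ℚ) / (p : ℚ) ^ i)
            = (∑ i ∈ Finset.Icc 1 n, t i / (p : ℚ) ^ i) + (1 / p) * (1 / b - 1)
          ↔ ∀ i : ℕ, 1 ≤ i → i ≤ n → ∃ z : ℤ, s i + 1 / b = z) := by
  obtain ⟨m, rfl⟩ : ∃ m, n = m + 1 := ⟨n - 1, (Nat.succ_pred_eq_of_pos hn).symm⟩
  set q : ℚ := (p : ℚ) with hqdef
  have hq2 : (2 : ℚ) ≤ q := by rw [hqdef]; exact_mod_cast hp.two_le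
  have hq0 : (0 : ℚ) < q := by linarith
  have hqne : q ≠ 0 := ne_of_gt hq0
  have hb0 : (0 : ℚ) < (b : ℚ) := by exact_mod_cast hb
  set f : ℕ → ℚ := fun i => Int.fract (s i) with hfdef
  set c : ℕ → ℚ := fun i => if i = m + 1 then (q ^ (m + 1))⁻¹ else (q - 1) / q ^ (i + 1)
    with hcdef
  have hcpos : ∀ i, 0 < c i := by
    intro i
    simp only [hcdef]
    split
    · positivity
    · apply div_pos (by linarith) (pow_pos hq0 _)
  -- reindexing
  have hreindex : ∀ g : ℕ → ℚ,
      ∑ i ∈ Finset.Icc 2 (m + 1), g i = ∑ i ∈ Finset.Icc 1 m, g (i + 1) := by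
    intro g
    rw [show Finset.Icc 2 (m + 1) = (Finset.Icc 1 m).map (addRightEmbedding 1) by
      rw [Finset.map_add_right_Icc], Finset.sum_map]
    rfl
  have hsplit : ∀ g : ℕ → ℚ,
      ∑ i ∈ Finset.Icc 1 (m + 1), g i = g 1 + ∑ i ∈ Finset.Icc 2 (m + 1), g i := by
    intro g
    rw [show Finset.Icc 2 (m + 1) = Finset.Ioc 1 (m + 1) by rw [← Finset.Icc_add_one_left_eq_Ioc]; rfl,
      ← Finset.sum_insert (by simp : (1 : ℕ) ∉ Finset.Ioc 1 (m + 1)),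
      Finset.Ioc_insert_left (by omega : (1 : ℕ) ≤ m + 1)]
  have htop : ∀ g : ℕ → ℚ,
      ∑ i ∈ Finset.Icc 1 (m + 1), g i = (∑ i ∈ Finset.Icc 1 m, g i) + g (m + 1) :=
    fun g => Finset.sum_Icc_succ_top (by omega) g
  -- L1
  have hL1 : ∀ g : ℕ → ℚ, ∑ i ∈ Finset.Icc 1 (m + 1), c i * g i
      = (∑ i ∈ Finset.Icc 1 (m + 1), g i / q ^ i)
        - ∑ i ∈ Finset.Icc 1 m, g i / q ^ (i + 1) := by
    intro g
    rw [htop (fun i => c i * g i), htop (fun i => g i / q ^ i)]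
    have h1 : ∀ i ∈ Finset.Icc 1 m, c i * g i = g i / q ^ i - g i / q ^ (i + 1) := by
      intro i hi
      simp only [Finset.mem_Icc] at hi
      have hne : i ≠ m + 1 := by omega
      simp only [hcdef, if_neg hne]
      rw [pow_succ]
      field_simp
    rw [Finset.sum_congr rfl h1, Finset.sum_sub_distrib]
    have hc : c (m + 1) = (q ^ (m + 1))⁻¹ := by simp [hcdef]
    rw [hc]
    field_simp
    ring
  -- sum of c
  have hcsum : ∑ i ∈ Finset.Icc 1 (m + 1), c i = q⁻¹ := by
    have h := hL1 (fun _ => 1)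
    simp only [mul_one] at h
    rw [h, show (∑ i ∈ Finset.Icc 1 m, (1 : ℚ) / q ^ (i + 1))
        = ∑ i ∈ Finset.Icc 2 (m + 1), 1 / q ^ i from (hreindex (fun i => 1 / q ^ i)).symm,
      hsplit (fun i => 1 / q ^ i)]
    simp [pow_one, one_div]
  -- fract bound
  have hfle : ∀ i, 1 ≤ i → i ≤ m + 1 → f i ≤ 1 - (b : ℚ)⁻¹ := by
    intro i h1 h2
    obtain ⟨z, hz⟩ := hsb i h1 h2
    have hfr : f i = s i - ⌊s i⌋ := rfl
    have hw : (b : ℚ) * f i = ((z - b * ⌊s i⌋ : ℤ) : ℚ) := by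
      push_cast
      rw [hfr]
      linarith [hz]
    have hf1 : f i < 1 := Int.fract_lt_one (s i)
    have hw1 : ((z - b * ⌊s i⌋ : ℤ) : ℚ) < b := by
      rw [← hw]
      nlinarith
    have hw2 : (z - b * ⌊s i⌋ : ℤ) ≤ (b : ℤ) - 1 := by
      have : (z - b * ⌊s i⌋ : ℤ) < (b : ℤ) := by exact_mod_cast hw1
      omega
    have hw2' : ((z - b * ⌊s i⌋ : ℤ) : ℚ) ≤ (b : ℚ) - 1 := by exact_mod_cast hw2
    have hgoal : (b : ℚ) * f i ≤ (b : ℚ) * (1 - (b : ℚ)⁻¹) := by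
      rw [hw]
      have he : (b : ℚ) * (1 - (b : ℚ)⁻¹) = (b : ℚ) - 1 := by field_simp
      rw [he]
      exact hw2'
    exact le_of_mul_le_mul_left hgoal hb0
  -- equality characterization per index
  have hfeq : ∀ i, 1 ≤ i → i ≤ m + 1 →
      (f i = 1 - (b : ℚ)⁻¹ ↔ ∃ z : ℤ, s i + 1 / b = z) := by
    intro i h1 h2
    have hfr : f i = s i - ⌊s i⌋ := rfl
    constructor
    · intro h
      refine ⟨⌊s i⌋ + 1, ?_⟩
      push_cast
      rw [one_div]
      linarith [hfr ▸ h]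
    · rintro ⟨z, hz⟩
      rw [one_div] at hz
      have hge : 0 ≤ f i := Int.fract_nonneg (s i)
      have hle : f i + (b : ℚ)⁻¹ ≤ 1 := by linarith [hfle i h1 h2]
      have hgt : 0 < f i + (b : ℚ)⁻¹ := by positivity
      have hcast : ((z - ⌊s i⌋ : ℤ) : ℚ) = f i + (b : ℚ)⁻¹ := by
        push_cast
        rw [hfr]
        linarith
      have h01 : (z - ⌊s i⌋ : ℤ) = 1 := by
        have a1 : (0 : ℚ) < ((z - ⌊s i⌋ : ℤ) : ℚ) := by rw [hcast]; exact hgt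
        have a2 : ((z - ⌊s i⌋ : ℤ) : ℚ) ≤ 1 := by rw [hcast]; exact hle
        have b1 : (0 : ℤ) < z - ⌊s i⌋ := by exact_mod_cast a1
        have b2 : (z - ⌊s i⌋ : ℤ) ≤ 1 := by exact_mod_cast a2
        omega
      have : ((z - ⌊s i⌋ : ℤ) : ℚ) = 1 := by exact_mod_cast h01
      rw [hcast] at this
      linarith
  -- key identity
  have hkey : (∑ i ∈ Finset.Icc 1 (m + 1), (⌊s i⌋ : ℚ) / q ^ i)
      = (∑ i ∈ Finset.Icc 1 (m + 1), t i / q ^ i)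
        - ∑ i ∈ Finset.Icc 1 (m + 1), c i * f i := by
    have h1 : ∀ i ∈ Finset.Icc 1 (m + 1),
        (⌊s i⌋ : ℚ) / q ^ i = s i / q ^ i - f i / q ^ i := by
      intro i _
      have hfr : f i = s i - ⌊s i⌋ := rfl
      rw [div_sub_div_same, hfr]
      ring_nf
    rw [Finset.sum_congr rfl h1, Finset.sum_sub_distrib, hL1 f]
    have h2 : ∑ i ∈ Finset.Icc 1 (m + 1), s i / q ^ i
        = (∑ i ∈ Finset.Icc 1 (m + 1), t i / q ^ i)
          + ∑ i ∈ Finset.Icc 1 m, f i / q ^ (i + 1) := by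
      have h3 : ∀ i ∈ Finset.Icc 2 (m + 1), s i / q ^ i = t i / q ^ i + f (i - 1) / q ^ i := by
        intro i hi
        simp only [Finset.mem_Icc] at hi
        rw [hrec i hi.1 hi.2, hfdef]
        ring
      have h4 : ∑ i ∈ Finset.Icc 2 (m + 1), f (i - 1) / q ^ i
          = ∑ i ∈ Finset.Icc 1 m, f i / q ^ (i + 1) := by
        rw [hreindex (fun i => f (i - 1) / q ^ i)]
        simp
      rw [hsplit (fun i => s i / q ^ i), hsplit (fun i => t i / q ^ i),
        Finset.sum_congr rfl h3, Finset.sum_add_distrib, h4, hs1]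
      ring
    rw [h2]
    ring
  -- bound on sum
  have hbnd : ∀ i ∈ Finset.Icc 1 (m + 1), c i * f i ≤ c i * (1 - (b : ℚ)⁻¹) := by
    intro i hi
    simp only [Finset.mem_Icc] at hi
    exact mul_le_mul_of_nonneg_left (hfle i hi.1 hi.2) (hcpos i).le
  have hsum_le : ∑ i ∈ Finset.Icc 1 (m + 1), c i * f i
      ≤ ∑ i ∈ Finset.Icc 1 (m + 1), c i * (1 - (b : ℚ)⁻¹) := Finset.sum_le_sum hbnd
  have hconst : ∑ i ∈ Finset.Icc 1 (m + 1), c i * (1 - (b : ℚ)⁻¹)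
      = q⁻¹ * (1 - (b : ℚ)⁻¹) := by rw [← Finset.sum_mul, hcsum]
  have hrhs : (1 / q) * (1 / (b : ℚ) - 1) = -(q⁻¹ * (1 - (b : ℚ)⁻¹)) := by
    rw [one_div, one_div]
    ring
  constructor
  · rw [ge_iff_le, hkey, hrhs]
    rw [hconst] at hsum_le
    linarith
  · rw [hkey, hrhs]
    constructor
    · intro h
      have heq : ∑ i ∈ Finset.Icc 1 (m + 1), c i * f i
          = ∑ i ∈ Finset.Icc 1 (m + 1), c i * (1 - (b : ℚ)⁻¹) := by
        rw [hconst]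
        linarith
      have := (Finset.sum_eq_sum_iff_of_le hbnd).mp heq
      intro i h1 h2
      have hi : i ∈ Finset.Icc 1 (m + 1) := Finset.mem_Icc.mpr ⟨h1, h2⟩
      have hci := this i hi
      have hfi : f i = 1 - (b : ℚ)⁻¹ :=
        mul_left_cancel₀ (ne_of_gt (hcpos i)) hci
      exact (hfeq i h1 h2).mp hfi
    · intro h
      have heq : ∀ i ∈ Finset.Icc 1 (m + 1), c i * f i = c i * (1 - (b : ℚ)⁻¹) := by
        intro i hi
        simp only [Finset.mem_Icc] at hi
        rw [(hfeq i hi.1 hi.2).mpr (h i hi.1 hi.2)]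
      rw [Finset.sum_congr rfl heq, hconst]
      ring
end

section
/- Let p be a prime, n a positive integer, and t_1, …, t_n ∈ ℚ. Define s_1, …, s_n by s_1 = t_1 and s_i = {s_{i−1}} + t_i for i ≥ 2, where {x} = x − ⌊x⌋ denotes the fractional part. Suppose b is a positive integer with b·s_i ∈ ℤ and b·t_i ∈ ℤ for all i, and suppose additionally that s_n ∈ ℤ. Then Σ_{i=1}^n ⌊s_i⌋/p^i ≥ Σ_{i=1}^n t_i/p^i + (1/p − 1/p^n)(1/b − 1), with equality if and only if s_i + 1/b ∈ ℤ for all i < n. -/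
/-- Let `p` be a prime, `n ≥ 1`, and `t_1, …, t_n ∈ ℚ`. Define `s_1 = t_1` and
`s_i = {s_{i-1}} + t_i` for `2 ≤ i ≤ n`, where `{x}` is the fractional part. If `b` is
a positive integer with `b·s_i ∈ ℤ` and `b·t_i ∈ ℤ` for all `i ∈ [1, n]`, and
additionally `s_n ∈ ℤ`, then
`∑_{i=1}^n ⌊s_i⌋/p^i ≥ ∑_{i=1}^n t_i/p^i + (1/p - 1/p^n)(1/b - 1)`, with equality if
and only if `s_i + 1/b ∈ ℤ` for all `i < n`. -/
theorem floor_sum_lemma_two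
    (p : ℕ) (hp : p.Prime) (n : ℕ) (hn : 0 < n) (t s : ℕ → ℚ)
    (hs1 : s 1 = t 1)
    (hrec : ∀ i : ℕ, 2 ≤ i → i ≤ n → s i = Int.fract (s (i - 1)) + t i)
    (b : ℕ) (hb : 0 < b)
    (hsb : ∀ i : ℕ, 1 ≤ i → i ≤ n → ∃ z : ℤ, (b : ℚ) * s i = z)
    (htb : ∀ i : ℕ, 1 ≤ i → i ≤ n → ∃ z : ℤ, (b : ℚ) * t i = z)
    (hsn : ∃ z : ℤ, s n = z) :
    (∑ i ∈ Finset.Icc 1 n, (⌊s i⌋ : ℚ) / (p : ℚ) ^ i)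
        ≥ (∑ i ∈ Finset.Icc 1 n, t i / (p : ℚ) ^ i)
            + (1 / p - 1 / (p : ℚ) ^ n) * (1 / b - 1)
      ∧ ((∑ i ∈ Finset.Icc 1 n, (⌊s i⌋ : ℚ) / (p : ℚ) ^ i)
            = (∑ i ∈ Finset.Icc 1 n, t i / (p : ℚ) ^ i)
                + (1 / p - 1 / (p : ℚ) ^ n) * (1 / b - 1)
          ↔ ∀ i : ℕ, 1 ≤ i → i < n → ∃ z : ℤ, s i + 1 / b = z) := by
  have hp2 : (2:ℚ) ≤ (p:ℚ) := by exact_mod_cast hp.two_le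
  have hppos : (0:ℚ) < (p:ℚ) := by linarith
  have hppow : ∀ i : ℕ, (0:ℚ) < (p:ℚ) ^ i := fun i => pow_pos hppos i
  have hpne : ∀ i : ℕ, ((p:ℚ) ^ i) ≠ 0 := fun i => (hppow i).ne'
  have hbq : (0:ℚ) < (b:ℚ) := by exact_mod_cast hb
  have hb1 : (1:ℚ) ≤ (b:ℚ) := by exact_mod_cast hb
  have hbinv : (b:ℚ) * (1 / b) = 1 := by field_simp
  have hbinv1 : 1 / (b:ℚ) ≤ 1 := by
    rw [div_le_one hbq]; exact hb1
  have hbinvpos : (0:ℚ) < 1 / (b:ℚ) := by positivity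
  -- p^(i+1) > p^i
  have hpowlt : ∀ i : ℕ, 1 / (p:ℚ) ^ (i+1) < 1 / (p:ℚ) ^ i := by
    intro i
    apply one_div_lt_one_div_of_lt (hppow i)
    rw [pow_succ]
    nlinarith [hppow i]
  -- fract bound
  have hfle : ∀ i : ℕ, 1 ≤ i → i ≤ n → Int.fract (s i) ≤ 1 - 1 / b := by
    intro i h1 h2
    obtain ⟨z, hz⟩ := hsb i h1 h2
    have hfr : (b:ℚ) * Int.fract (s i) = ((z - b * ⌊s i⌋ : ℤ) : ℚ) := by
      rw [Int.fract]; push_cast; rw [← hz]; ring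
    have hlt : ((z - b * ⌊s i⌋ : ℤ) : ℚ) < b := by
      rw [← hfr]
      nlinarith [Int.fract_lt_one (s i)]
    have hlt' : (z - b * ⌊s i⌋ : ℤ) < (b : ℤ) := by exact_mod_cast hlt
    have hle : ((z - b * ⌊s i⌋ : ℤ) : ℚ) ≤ (b:ℚ) - 1 := by
      have : (z - b * ⌊s i⌋ : ℤ) ≤ (b:ℤ) - 1 := by omega
      calc ((z - b * ⌊s i⌋ : ℤ) : ℚ) ≤ (((b:ℤ) - 1 : ℤ) : ℚ) := by exact_mod_cast this
        _ = (b:ℚ) - 1 := by push_cast; ring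
    nlinarith [hfr]
  -- key identity
  have key : ∀ m : ℕ, 1 ≤ m → m ≤ n →
      ∑ i ∈ Finset.Icc 1 m, ((⌊s i⌋ : ℚ) - t i) / (p:ℚ) ^ i
        = - Int.fract (s m) / (p:ℚ) ^ m
          + ∑ i ∈ Finset.Icc 1 (m-1),
              Int.fract (s i) * (1 / (p:ℚ) ^ (i+1) - 1 / (p:ℚ) ^ i) := by
    intro m hm
    induction m, hm using Nat.le_induction with
    | base =>
      intro _
      rw [Finset.Icc_self, Finset.sum_singleton]
      simp only [Nat.sub_self]
      rw [show Finset.Icc 1 0 = ∅ by rfl, Finset.sum_empty, add_zero]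
      rw [hs1, Int.fract]
      ring
    | succ m hm ih =>
      intro hmn
      have ih' := ih (by omega)
      rcases Nat.exists_eq_succ_of_ne_zero (by omega : m ≠ 0) with ⟨k, rfl⟩
      rw [Finset.sum_Icc_succ_top (by omega : 1 ≤ k + 1 + 1), ih']
      simp only [Nat.succ_eq_add_one, Nat.add_sub_cancel]
      rw [Finset.sum_Icc_succ_top (by omega : 1 ≤ k + 1)]
      have hr : s (k+2) = Int.fract (s (k+1)) + t (k+2) := by
        have := hrec (k+2) (by omega) hmn
        simpa using this
      have hfl : ((⌊s (k+2)⌋ : ℚ)) = Int.fract (s (k+1)) + t (k+2) - Int.fract (s (k+2)) := by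
        have h1 : (⌊s (k+2)⌋ : ℚ) = s (k+2) - Int.fract (s (k+2)) := by
          rw [Int.fract]; ring
        rw [h1, hr]
      rw [hfl]
      have e1 := hpne (k+1)
      have e2 := hpne (k+2)
      field_simp
      ring
  -- telescoping
  have tel : ∀ m : ℕ, 1 ≤ m →
      ∑ i ∈ Finset.Icc 1 (m-1), (1 / (p:ℚ) ^ i - 1 / (p:ℚ) ^ (i+1))
        = 1 / (p:ℚ) - 1 / (p:ℚ) ^ m := by
    intro m hm
    induction m, hm using Nat.le_induction with
    | base =>
      rw [show (1:ℕ) - 1 = 0 by rfl, show Finset.Icc 1 0 = ∅ by rfl, Finset.sum_empty]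
      rw [pow_one]; ring
    | succ m hm ih =>
      rcases Nat.exists_eq_succ_of_ne_zero (by omega : m ≠ 0) with ⟨k, rfl⟩
      simp only [Nat.succ_eq_add_one, Nat.succ_sub_one] at ih
      rw [show k + 1 + 1 - 1 = k + 1 from rfl,
        Finset.sum_Icc_succ_top (by omega : 1 ≤ k + 1), ih]
      simp only [Nat.succ_eq_add_one]
      ring
  have hfn : Int.fract (s n) = 0 := by
    obtain ⟨z, hz⟩ := hsn
    rw [hz, Int.fract_intCast]
  have keyn := key n hn le_rfl
  rw [hfn] at keyn
  have hsub : (∑ i ∈ Finset.Icc 1 n, (⌊s i⌋ : ℚ) / (p:ℚ) ^ i)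
      - (∑ i ∈ Finset.Icc 1 n, t i / (p:ℚ) ^ i)
      = ∑ i ∈ Finset.Icc 1 n, ((⌊s i⌋ : ℚ) - t i) / (p:ℚ) ^ i := by
    rw [← Finset.sum_sub_distrib]
    exact Finset.sum_congr rfl fun i _ => by rw [sub_div]
  have hC : (1 / (p:ℚ) - 1 / (p:ℚ) ^ n) * (1 / b - 1)
      = ∑ i ∈ Finset.Icc 1 (n-1),
          (1 / (b:ℚ) - 1) * (1 / (p:ℚ) ^ i - 1 / (p:ℚ) ^ (i+1)) := by
    rw [← Finset.mul_sum, tel n hn]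
    ring
  have hG : (∑ i ∈ Finset.Icc 1 n, (⌊s i⌋ : ℚ) / (p:ℚ) ^ i)
      - ((∑ i ∈ Finset.Icc 1 n, t i / (p:ℚ) ^ i)
          + (1 / (p:ℚ) - 1 / (p:ℚ) ^ n) * (1 / b - 1))
      = ∑ i ∈ Finset.Icc 1 (n-1),
          ((1 - 1 / (b:ℚ)) - Int.fract (s i)) * (1 / (p:ℚ) ^ i - 1 / (p:ℚ) ^ (i+1)) := by
    rw [sub_add_eq_sub_sub, hsub, keyn, hC, neg_div, zero_div, neg_zero, zero_add,
      ← Finset.sum_sub_distrib]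
    exact Finset.sum_congr rfl fun i _ => by ring
  have hterm : ∀ i ∈ Finset.Icc 1 (n-1),
      0 ≤ ((1 - 1 / (b:ℚ)) - Int.fract (s i)) * (1 / (p:ℚ) ^ i - 1 / (p:ℚ) ^ (i+1)) := by
    intro i hi
    rw [Finset.mem_Icc] at hi
    apply mul_nonneg
    · linarith [hfle i hi.1 (by omega)]
    · linarith [hpowlt i]
  have hGnn : 0 ≤ ∑ i ∈ Finset.Icc 1 (n-1),
      ((1 - 1 / (b:ℚ)) - Int.fract (s i)) * (1 / (p:ℚ) ^ i - 1 / (p:ℚ) ^ (i+1)) :=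
    Finset.sum_nonneg hterm
  constructor
  · linarith [hG, hGnn]
  · constructor
    · intro heq i h1 h2
      have hz : ∑ i ∈ Finset.Icc 1 (n-1),
          ((1 - 1 / (b:ℚ)) - Int.fract (s i)) * (1 / (p:ℚ) ^ i - 1 / (p:ℚ) ^ (i+1)) = 0 := by
        rw [← hG]; linarith
      have hterm0 := (Finset.sum_eq_zero_iff_of_nonneg hterm).mp hz i
        (Finset.mem_Icc.mpr ⟨h1, by omega⟩)
      have h2pos : 0 < 1 / (p:ℚ) ^ i - 1 / (p:ℚ) ^ (i+1) := by linarith [hpowlt i]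
      have hfeq : Int.fract (s i) = 1 - 1 / b := by
        rcases mul_eq_zero.mp hterm0 with h | h
        · linarith
        · linarith
      refine ⟨⌊s i⌋ + 1, ?_⟩
      rw [Int.fract] at hfeq
      push_cast
      linarith
    · intro h
      have hz : ∀ i ∈ Finset.Icc 1 (n-1),
          ((1 - 1 / (b:ℚ)) - Int.fract (s i)) * (1 / (p:ℚ) ^ i - 1 / (p:ℚ) ^ (i+1)) = 0 := by
        intro i hi
        rw [Finset.mem_Icc] at hi
        obtain ⟨z, hz⟩ := h i hi.1 (by omega)
        have hw : ((z - ⌊s i⌋ : ℤ) : ℚ) = Int.fract (s i) + 1 / b := by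
          push_cast; rw [Int.fract]; linarith [hz]
        have h0 : (0:ℚ) < ((z - ⌊s i⌋ : ℤ) : ℚ) := by
          rw [hw]; have := Int.fract_nonneg (s i); linarith
        have h2 : ((z - ⌊s i⌋ : ℤ) : ℚ) < 2 := by
          rw [hw]; have := Int.fract_lt_one (s i); linarith
        have h0' : (0:ℤ) < z - ⌊s i⌋ := by exact_mod_cast h0
        have h2' : (z - ⌊s i⌋ : ℤ) < 2 := by exact_mod_cast h2
        have hone : (z - ⌊s i⌋ : ℤ) = 1 := by omega
        have hfeq : Int.fract (s i) = 1 - 1 / b := by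
          rw [hone] at hw; push_cast at hw; linarith
        rw [hfeq]
        ring
      have : ∑ i ∈ Finset.Icc 1 (n-1),
          ((1 - 1 / (b:ℚ)) - Int.fract (s i)) * (1 / (p:ℚ) ^ i - 1 / (p:ℚ) ^ (i+1)) = 0 :=
        Finset.sum_eq_zero hz
      linarith [hG]
end

section
/- Let G be a nontrivial finite abelian group. Then k(G) + 1/exp(G) ≤ K(G) ≤ k(G) + 1/P⁻(exp(G)), where P⁻(n) denotes the smallest prime dividing an integer n > 1. -/
/-- `S` is a minimal zero-sum sequence: nonempty, sum zero, and no nonempty proper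
sub-multiset has sum `0`. -/
def IsMinZeroSum {G : Type*} [AddCommGroup G] (S : Multiset G) : Prop :=
  S ≠ 0 ∧ S.sum = 0 ∧ ∀ T : Multiset G, T ≤ S → T ≠ 0 → T ≠ S → T.sum ≠ 0

/-- The cross number `K(G)`: the maximal cross number of a minimal zero-sum
sequence over `G`. -/
noncomputable def bigK (G : Type*) [AddCommGroup G] : ℝ :=
  sSup {x : ℝ | ∃ S : Multiset G, IsMinZeroSum S ∧ crossNum S = x}

section Aux

variable {G : Type*} [AddCommGroup G] [Finite G]

omit [Finite G] in
lemma crossNum_nonneg (S : Multiset G) : 0 ≤ crossNum S := by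
  apply Multiset.sum_nonneg
  intro x hx
  obtain ⟨g, _, rfl⟩ := Multiset.mem_map.1 hx
  positivity

omit [Finite G] in
lemma crossNum_cons (g : G) (S : Multiset G) :
    crossNum (g ::ₘ S) = ((addOrderOf g : ℝ))⁻¹ + crossNum S := by
  simp [crossNum]

lemma crossNum_le_card [DecidableEq G] (S : Multiset G) (h : ∀ g : G, S.count g ≤ addOrderOf g) :
    crossNum S ≤ (Nat.card G : ℝ) := by
  classical
  have _inst := Fintype.ofFinite G
  rw [crossNum, Finset.sum_multiset_map_count]
  calc (∑ g ∈ S.toFinset, S.count g • ((addOrderOf g : ℝ))⁻¹)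
      ≤ ∑ _g ∈ S.toFinset, (1 : ℝ) := by
        apply Finset.sum_le_sum
        intro g _
        have hpos : (0 : ℝ) < (addOrderOf g : ℝ) := by
          exact_mod_cast addOrderOf_pos g
        rw [nsmul_eq_mul, ← mul_inv_cancel₀ hpos.ne']
        apply mul_le_mul_of_nonneg_right _ (by positivity)
        exact_mod_cast h g
    _ = (S.toFinset.card : ℝ) := by simp
    _ ≤ (Nat.card G : ℝ) := by
        rw [Nat.card_eq_fintype_card]
        exact_mod_cast Finset.card_le_univ S.toFinset

lemma replicate_addOrderOf_ne_zero (g : G) :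
    Multiset.replicate (addOrderOf g) g ≠ 0 := by
  intro h
  apply (addOrderOf_pos g).ne'
  simpa using congrArg Multiset.card h

lemma count_le_of_zsf [DecidableEq G] {S : Multiset G} (hS : IsZeroSumFree S) (g : G) :
    S.count g ≤ addOrderOf g := by
  classical
  by_contra hlt
  push_neg at hlt
  have hle : Multiset.replicate (addOrderOf g) g ≤ S :=
    Multiset.le_count_iff_replicate_le.1 hlt.le
  refine hS _ hle (replicate_addOrderOf_ne_zero g) ?_
  rw [Multiset.sum_replicate]
  exact addOrderOf_nsmul_eq_zero g

lemma count_le_of_minZeroSum [DecidableEq G] {S : Multiset G} (hS : IsMinZeroSum S) (g : G) :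
    S.count g ≤ addOrderOf g := by
  classical
  by_contra hlt
  push_neg at hlt
  have hle : Multiset.replicate (addOrderOf g) g ≤ S :=
    Multiset.le_count_iff_replicate_le.1 hlt.le
  refine hS.2.2 _ hle (replicate_addOrderOf_ne_zero g) ?_ ?_
  · intro hEq
    have hcard : Multiset.card S = addOrderOf g := by
      rw [← hEq, Multiset.card_replicate]
    have := S.count_le_card g
    omega
  · rw [Multiset.sum_replicate]
    exact addOrderOf_nsmul_eq_zero g

lemma bddA : BddAbove {x : ℝ | ∃ S : Multiset G, IsZeroSumFree S ∧ crossNum S = x} := by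
  classical
  refine ⟨(Nat.card G : ℝ), ?_⟩
  rintro x ⟨S, hS, rfl⟩
  exact crossNum_le_card S (count_le_of_zsf hS)

lemma bddB : BddAbove {x : ℝ | ∃ S : Multiset G, IsMinZeroSum S ∧ crossNum S = x} := by
  classical
  refine ⟨(Nat.card G : ℝ), ?_⟩
  rintro x ⟨S, hS, rfl⟩
  exact crossNum_le_card S (count_le_of_minZeroSum hS)

omit [Finite G] in
lemma minZeroSum_cons {S : Multiset G} (hS : IsZeroSumFree S) :
    IsMinZeroSum ((-S.sum) ::ₘ S) := by
  classical
  refine ⟨Multiset.cons_ne_zero, by simp, ?_⟩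
  intro T hT hT0 hTne
  by_cases hg : -S.sum ∈ T
  · set T' := T.erase (-S.sum) with hT'def
    have hT'le : T' ≤ S := by
      have := Multiset.erase_le_erase (-S.sum) hT
      rwa [Multiset.erase_cons_head] at this
    have hTeq : T = (-S.sum) ::ₘ T' := (Multiset.cons_erase hg).symm
    have hT'ne : T' ≠ S := by
      intro h
      apply hTne
      rw [hTeq, h]
    have hsub0 : S - T' ≠ 0 := fun h0 =>
      hT'ne (le_antisymm hT'le (tsub_eq_zero_iff_le.1 h0))
    have hsum : (S - T').sum + T'.sum = S.sum := by
      rw [← Multiset.sum_add, tsub_add_cancel_of_le hT'le]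
    intro h0
    rw [hTeq, Multiset.sum_cons] at h0
    have hT'sum : T'.sum = S.sum := by
      rwa [add_comm, ← sub_eq_add_neg, sub_eq_zero] at h0
    apply hS (S - T') tsub_le_self hsub0
    rw [hT'sum] at hsum
    exact add_right_cancel (hsum.trans (zero_add S.sum).symm)
  · have hle : T ≤ S := by
      rw [Multiset.le_iff_count]
      intro a
      have h := (Multiset.le_iff_count.1 hT) a
      rcases eq_or_ne a (-S.sum) with rfl | hne
      · simp [Multiset.count_eq_zero_of_notMem hg]
      · rwa [Multiset.count_cons_of_ne hne] at h
    exact hS T hle hT0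

lemma zsf_erase [DecidableEq G] {S : Multiset G} (hS : IsMinZeroSum S) {g : G} (hg : g ∈ S) :
    IsZeroSumFree (S.erase g) := by
  classical
  intro T hT hT0
  refine hS.2.2 T (hT.trans (S.erase_le g)) hT0 fun hTS => ?_
  have h1 := Multiset.card_le_card hT
  rw [Multiset.card_erase_of_mem hg, hTS] at h1
  have h2 : 0 < Multiset.card S := Multiset.card_pos.2 hS.1
  exact absurd h1 (Nat.not_le.2 (Nat.pred_lt h2.ne'))

end Aux

/-- For a nontrivial finite abelian group `G`:
`k(G) + 1/exp(G) ≤ K(G) ≤ k(G) + 1/P⁻(exp(G))`, where `P⁻(n)` is the smallest prime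
divisor of `n`. -/
theorem littleK_add_inv_exponent_le_bigK_le
    (G : Type*) [AddCommGroup G] [Finite G] [Nontrivial G] :
    littleK G + ((AddMonoid.exponent G : ℝ))⁻¹ ≤ bigK G ∧
      bigK G ≤ littleK G + (((AddMonoid.exponent G).minFac : ℝ))⁻¹ := by
  classical
  set e := AddMonoid.exponent G with he
  have hee : AddMonoid.ExponentExists G := AddMonoid.ExponentExists.of_finite
  have hepos : 0 < e := AddMonoid.exponent_pos.2 hee
  have heR : (0 : ℝ) < (e : ℝ) := by exact_mod_cast hepos
  set p := e.minFac with hp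
  have hppos : 0 < p := Nat.minFac_pos e
  have hpR : (0 : ℝ) < (p : ℝ) := by exact_mod_cast hppos
  have hple : p ≤ e := Nat.minFac_le hepos
  have hpeR : (e : ℝ)⁻¹ ≤ (p : ℝ)⁻¹ := by
    apply inv_anti₀ hpR
    exact_mod_cast hple
  have hA0 : (0 : ℝ) ∈ {x : ℝ | ∃ S : Multiset G, IsZeroSumFree S ∧ crossNum S = x} := by
    refine ⟨0, fun T hT hT0 => absurd (Multiset.le_zero.1 hT) hT0, by simp [crossNum]⟩
  -- an element of order `e`
  obtain ⟨g₀, hg₀⟩ := AddMonoid.exists_addOrderOf_eq_exponent hee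
  -- `littleK G ≥ 1 - 1/e`
  have hrep_zsf : IsZeroSumFree (Multiset.replicate (e - 1) g₀) := by
    intro T hT hT0
    obtain ⟨k, hk, rfl⟩ := Multiset.le_replicate_iff.1 hT
    rw [Multiset.sum_replicate]
    intro h0
    have hdvd : addOrderOf g₀ ∣ k := addOrderOf_dvd_of_nsmul_eq_zero h0
    have hk0 : k ≠ 0 := by
      intro h; apply hT0; rw [h]; rfl
    have := Nat.le_of_dvd (Nat.pos_of_ne_zero hk0) hdvd
    rw [hg₀] at this
    omega
  have hrep_val : crossNum (Multiset.replicate (e - 1) g₀) = 1 - (e : ℝ)⁻¹ := by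
    rw [crossNum, Multiset.map_replicate, Multiset.sum_replicate, hg₀, nsmul_eq_mul]
    have : ((e - 1 : ℕ) : ℝ) = (e : ℝ) - 1 := by
      have : 1 ≤ e := hepos
      push_cast [this]
      ring
    rw [this, ← he]
    field_simp
  have hlK : 1 - (e : ℝ)⁻¹ ≤ littleK G :=
    le_csSup bddA ⟨_, hrep_zsf, hrep_val⟩
  have hlK0 : (0 : ℝ) ≤ littleK G := le_csSup bddA hA0
  constructor
  · -- littleK + 1/e ≤ bigK
    have key : ∀ x ∈ {x : ℝ | ∃ S : Multiset G, IsZeroSumFree S ∧ crossNum S = x},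
        x + (e : ℝ)⁻¹ ≤ bigK G := by
      rintro x ⟨S, hS, rfl⟩
      have hmin := minZeroSum_cons hS
      have hmem : crossNum ((-S.sum) ::ₘ S) ∈
          {x : ℝ | ∃ S : Multiset G, IsMinZeroSum S ∧ crossNum S = x} := ⟨_, hmin, rfl⟩
      have hle : crossNum ((-S.sum) ::ₘ S) ≤ bigK G := le_csSup bddB hmem
      rw [crossNum_cons] at hle
      have hordle : addOrderOf (-S.sum) ≤ e := AddMonoid.addOrderOf_le_exponent hee _
      have hordpos : (0 : ℝ) < (addOrderOf (-S.sum) : ℝ) := by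
        exact_mod_cast addOrderOf_pos (-S.sum)
      have : (e : ℝ)⁻¹ ≤ ((addOrderOf (-S.sum) : ℝ))⁻¹ := by
        apply inv_anti₀ hordpos
        exact_mod_cast hordle
      linarith
    have h1 : littleK G ≤ bigK G - (e : ℝ)⁻¹ :=
      csSup_le ⟨0, hA0⟩ (fun x hx => by linarith [key x hx])
    linarith
  · -- bigK ≤ littleK + 1/p
    apply Real.sSup_le _ (by positivity)
    rintro x ⟨S, hS, rfl⟩
    obtain ⟨g, hg⟩ := Multiset.exists_mem_of_ne_zero hS.1
    rcases eq_or_ne g 0 with rfl | hg0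
    · -- then S = {0} and crossNum S = 1
      have hSeq : S = {0} := by
        by_contra hne
        exact hS.2.2 {0} ((Multiset.singleton_le).2 hg) (by simp) (fun h => hne h.symm)
          (by simp)
      rw [hSeq]
      have : crossNum ({0} : Multiset G) = 1 := by simp [crossNum]
      rw [this]
      linarith
    · have hord1 : addOrderOf g ≠ 1 := fun h => hg0 (AddMonoid.addOrderOf_eq_one_iff.1 h)
      have hord2 : 2 ≤ addOrderOf g := by
        have := addOrderOf_pos g
        omega
      have hpord : p ≤ addOrderOf g :=
        Nat.minFac_le_of_dvd hord2 (AddMonoid.addOrder_dvd_exponent g)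
      have hordR : (0 : ℝ) < (addOrderOf g : ℝ) := by exact_mod_cast addOrderOf_pos g
      have hinv : ((addOrderOf g : ℝ))⁻¹ ≤ (p : ℝ)⁻¹ := by
        apply inv_anti₀ hpR
        exact_mod_cast hpord
      have hsplit : crossNum S = ((addOrderOf g : ℝ))⁻¹ + crossNum (S.erase g) := by
        conv_lhs => rw [← Multiset.cons_erase hg]
        rw [crossNum_cons]
      have herase : crossNum (S.erase g) ≤ littleK G :=
        le_csSup bddA ⟨_, zsf_erase hS hg, rfl⟩
      rw [hsplit]
      linarith
end

section
/- Let G₁ and G₂ be finite abelian groups, G = G₁ ⊕ G₂, and let S be a zero-sum free sequence over G. Let T be a subsequence of S such that the set of subsums Σ(T) contains every element of (G₁ ∖ {0}) ⊕ {0}. Then no nonempty subsequence of S·T^{−1} has sum lying in G₁ ⊕ {0}; equivalently, the image of S·T^{−1} under the projection π: G → G₂ is a zero-sum free sequence over G₂. In particular k(S·T^{−1}) ≤ k(π(S·T^{−1})) ≤ k(G₂). -/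
/-- The set of subsums of a sequence `S`: sums of nonempty sub-multisets of `S`. -/
def subsums {G : Type*} [AddCommGroup G] (S : Multiset G) : Set G :=
  {x | ∃ T : Multiset G, T ≤ S ∧ T ≠ 0 ∧ T.sum = x}

/-- Any sub-multiset of a mapped multiset is the image of a sub-multiset. -/
lemma exists_preimage_le_aux {α β : Type*} (f : α → β) (m : Multiset α) :
    ∀ V ≤ m.map f, ∃ W ≤ m, W.map f = V := by
  induction m using Multiset.induction with
  | empty =>
    intro V hV
    simp only [Multiset.map_zero, Multiset.le_zero] at hV
    exact ⟨0, le_refl 0, by simp [hV]⟩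
  | cons a m ih =>
    intro V hV
    rw [Multiset.map_cons] at hV
    by_cases h : f a ∈ V
    · obtain ⟨V', rfl⟩ := Multiset.exists_cons_of_mem h
      obtain ⟨W, hW, hWm⟩ := ih V' ((Multiset.cons_le_cons_iff _).1 hV)
      exact ⟨a ::ₘ W, Multiset.cons_le_cons a hW, by rw [Multiset.map_cons, hWm]⟩
    · obtain ⟨W, hW, hWm⟩ := ih V ((Multiset.le_cons_of_notMem h).mp hV)
      exact ⟨W, hW.trans (Multiset.le_cons_self m a), hWm⟩

/-- A zero-sum free sequence over a finite group has length `< |G|`. -/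
lemma zsf_card_lt_aux {G : Type*} [AddCommGroup G] [Finite G] (S : Multiset G)
    (h : IsZeroSumFree S) : S.card + 1 ≤ Nat.card G := by
  classical
  set l := S.toList with hl
  have hlS : (l : Multiset G) = S := S.coe_toList
  have key : ∀ i j : ℕ, i < j → j ≤ l.length → (l.take i).sum ≠ (l.take j).sum := by
    intro i j hij hj heq
    set seg := (l.drop i).take (j - i) with hseg
    have htake : l.take j = l.take i ++ seg := by
      rw [hseg, ← List.take_add, Nat.add_sub_cancel' hij.le]
    have hsum : seg.sum = 0 := by
      rw [htake, List.sum_append] at heq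
      exact (left_eq_add.mp heq)
    have hsubl : List.Sublist seg l :=
      ((l.drop i).take_sublist _).trans (l.drop_sublist i)
    have hle : (seg : Multiset G) ≤ S := by
      rw [← hlS]
      exact Multiset.coe_le.mpr hsubl.subperm
    have hne : seg ≠ [] := by
      have hlen : seg.length = min (j - i) (l.length - i) := by
        simp [hseg]
      intro hnil
      rw [hnil] at hlen
      simp only [List.length_nil] at hlen
      omega
    exact h (seg : Multiset G) hle (by simpa using hne) (by simpa using hsum)
  have hinj : Function.Injective (fun i : Fin (l.length + 1) => (l.take i).sum) := by
    intro i j hij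
    rcases lt_trichotomy (i : ℕ) (j : ℕ) with h' | h' | h'
    · exact absurd hij (key i j h' (Nat.lt_succ_iff.mp j.isLt))
    · exact Fin.ext h'
    · exact absurd hij.symm (key j i h' (Nat.lt_succ_iff.mp i.isLt))
  have := Nat.card_le_card_of_injective _ hinj
  simp only [Nat.card_eq_fintype_card, Fintype.card_fin] at this
  have hlen : S.card = l.length := by rw [← hlS]; simp
  omega

/-- The cross number of a zero-sum free sequence over a finite group is at most `|G|`. -/
lemma zsf_crossNum_le_aux {G : Type*} [AddCommGroup G] [Finite G] (S : Multiset G)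
    (h : IsZeroSumFree S) : crossNum S ≤ (Nat.card G : ℝ) := by
  have h1 : crossNum S ≤ (S.card : ℝ) := by
    have := Multiset.sum_le_card_nsmul (S.map fun g => ((addOrderOf g : ℝ))⁻¹) 1 ?_
    · simpa [crossNum] using this
    · intro x hx
      obtain ⟨g, _, rfl⟩ := Multiset.mem_map.mp hx
      have : (1 : ℝ) ≤ (addOrderOf g : ℝ) := by
        exact_mod_cast Nat.one_le_iff_ne_zero.mpr (addOrderOf_pos g).ne'
      exact inv_le_one_of_one_le₀ this
  have h2 := zsf_card_lt_aux S h
  calc crossNum S ≤ (S.card : ℝ) := h1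
    _ ≤ (Nat.card G : ℝ) := by exact_mod_cast le_of_lt (by omega)

/-- Let `G = G₁ ⊕ G₂` and `S` a zero-sum free sequence over `G`. If `T` is a
subsequence of `S` whose set of subsums contains all of `(G₁ ∖ {0}) ⊕ {0}`, then no
nonempty subsequence of `S·T⁻¹` has sum in `G₁ ⊕ {0}`; equivalently the image of
`S·T⁻¹` under the projection to `G₂` is zero-sum free over `G₂`. In particular
`k(S·T⁻¹) ≤ k(π(S·T⁻¹)) ≤ k(G₂)`. -/
theorem projection_zero_sum_free_of_subsums_cover
    (G₁ G₂ : Type*) [AddCommGroup G₁] [AddCommGroup G₂] [Finite G₁] [Finite G₂]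
    [DecidableEq G₁] [DecidableEq G₂]
    (S : Multiset (G₁ × G₂)) (hS : IsZeroSumFree S)
    (T : Multiset (G₁ × G₂)) (hT : T ≤ S)
    (hcover : ∀ g : G₁, g ≠ 0 → ((g, 0) : G₁ × G₂) ∈ subsums T) :
    (∀ W : Multiset (G₁ × G₂), W ≤ S - T → W ≠ 0 → W.sum.2 ≠ 0) ∧
      IsZeroSumFree ((S - T).map Prod.snd) ∧
      crossNum (S - T) ≤ crossNum ((S - T).map Prod.snd) ∧
      crossNum ((S - T).map Prod.snd) ≤ littleK G₂ := by
  have hST : (S - T) + T = S := tsub_add_cancel_of_le hT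
  have part1 : ∀ W : Multiset (G₁ × G₂), W ≤ S - T → W ≠ 0 → W.sum.2 ≠ 0 := by
    intro W hW hW0 hsnd
    by_cases hfst : W.sum.1 = 0
    · have hWsum : W.sum = 0 := Prod.ext hfst hsnd
      exact hS W (hW.trans (Multiset.sub_le_self S T)) hW0 hWsum
    · obtain ⟨U, hUT, hU0, hUsum⟩ := hcover (-W.sum.1) (neg_ne_zero.mpr hfst)
      have hle : W + U ≤ S := by
        rw [← hST]; exact add_le_add hW hUT
      have hne : W + U ≠ 0 := fun h =>
        hU0 (Multiset.le_zero.mp (h ▸ le_add_self))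
      have hsum : (W + U).sum = 0 := by
        rw [Multiset.sum_add, hUsum]
        ext
        · simp
        · simp [hsnd]
      exact hS (W + U) hle hne hsum
  have part2 : IsZeroSumFree ((S - T).map Prod.snd) := by
    intro V hV hV0 hVsum
    obtain ⟨W, hW, rfl⟩ := exists_preimage_le_aux Prod.snd (S - T) V hV
    have hW0 : W ≠ 0 := by
      intro h; rw [h] at hV0; simp at hV0
    have : W.sum.2 = 0 := by
      rw [← hVsum]
      exact (map_multiset_sum (AddMonoidHom.snd G₁ G₂) W).symm ▸ rfl
    exact part1 W hW hW0 this
  have part3 : crossNum (S - T) ≤ crossNum ((S - T).map Prod.snd) := by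
    unfold crossNum
    rw [Multiset.map_map]
    apply Multiset.sum_map_le_sum_map
    intro g _
    have hdvd : addOrderOf g.2 ∣ addOrderOf g := by
      have := addOrderOf_map_dvd (AddMonoidHom.snd G₁ G₂) g
      simpa using this
    have hpos2 : 0 < addOrderOf g.2 := addOrderOf_pos g.2
    have hle : addOrderOf g.2 ≤ addOrderOf g := Nat.le_of_dvd (addOrderOf_pos g) hdvd
    have : (0 : ℝ) < (addOrderOf g.2 : ℝ) := by exact_mod_cast hpos2
    show ((addOrderOf g : ℝ))⁻¹ ≤ ((addOrderOf g.2 : ℝ))⁻¹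
    exact inv_anti₀ this (by exact_mod_cast hle)
  have part4 : crossNum ((S - T).map Prod.snd) ≤ littleK G₂ := by
    apply le_csSup
    · exact ⟨(Nat.card G₂ : ℝ), by rintro x ⟨S', hz, rfl⟩; exact zsf_crossNum_le_aux S' hz⟩
    · exact ⟨(S - T).map Prod.snd, part2, rfl⟩
  exact ⟨part1, part2, part3, part4⟩
end
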